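/- (Lemma 1 of the paper.) Let DB be an uncertain database all of whose existential probabilities are nonnegative. Then for every nonempty pattern α, expSup(α) ≤ expSup^cap(α); that is, the upper bound expSup^cap of a pattern is always greater than or equal to its actual expected support. -/

import Mathlib

variable {I : Type*}

/-- An uncertain sequence: a finite list of (item, existential probability) pairs. -/
abbrev USeq (I : Type*) := List (I × ℝ)

/-- An uncertain database: a finite list of uncertain sequences. -/
abbrev UDB (I : Type*) := List (USeq I)

/-- `α` occurs in `S`: some sublist of `S` has item list `α`. -/
def Occurs (α : List I) (S : USeq I) : Prop :=
  ∃ o : USeq I, o.Sublist S ∧ o.map Prod.fst = α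

/-- Maximum occurrence probability of pattern `α` in `S`
(`0` if `α` has no occurrence in `S`; `1` for the empty pattern). -/
noncomputable def maxPrS [DecidableEq I] (α : List I) (S : USeq I) : ℝ :=
  WithBot.unbotD 0 (((S.sublists.filter fun o => decide (o.map Prod.fst = α)).map
      fun o => (o.map Prod.snd).prod).maximum)

/-- Greedy projection: `projSeq α S = some S'` iff `α` occurs in `S`, in which case `S'`
is the suffix of `S` strictly after the last matched position of the greedy (leftmost)
occurrence of `α` in `S`.  For the empty pattern it is `S` itself. -/
def projSeq [DecidableEq I] : List I → USeq I → Option (USeq I)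
  | [], S => some S
  | _ :: _, [] => none
  | i :: α, (x, _) :: rest =>
      if x = i then projSeq α rest else projSeq (i :: α) rest

/-- The projected database `DB|α`. -/
def projDB [DecidableEq I] (α : List I) (DB : UDB I) : UDB I :=
  DB.filterMap (projSeq α)

/-- `P̂_D(i)`: maximum probability of an entry with item `i` over all sequences of `D`
(`0` if `i` occurs in no sequence of `D`). -/
noncomputable def Phat [DecidableEq I] (D : UDB I) (i : I) : ℝ :=
  WithBot.unbotD 0 (((D.flatten.filter fun e => decide (e.1 = i)).map Prod.snd).maximum)

/-- `maxPr(α)` relative to `DB`: the product of per-step maximum probabilities over the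
successively projected databases. -/
noncomputable def maxPrDB [DecidableEq I] (DB : UDB I) (α : List I) : ℝ :=
  ∏ k : Fin α.length, Phat (projDB (α.take k.val) DB) (α.get k)

/-- Expected support of `α` in `DB`. -/
noncomputable def expSup [DecidableEq I] (DB : UDB I) (α : List I) : ℝ :=
  (DB.map fun S => maxPrS α S).sum

/-- `expSup^cap` of a nonempty pattern (junk value `0` on the empty pattern). -/
noncomputable def expSupCap [DecidableEq I] (DB : UDB I) (α : List I) : ℝ :=
  match α.getLast? with
  | none => 0
  | some i =>
      maxPrDB DB α.dropLast *
        ((projDB α.dropLast DB).map fun S' => maxPrS [i] S').sum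

/-- Number of sequences of `D` in which item `i` occurs. -/
def supCount [DecidableEq I] (D : UDB I) (i : I) : ℕ :=
  (D.filter fun S => decide (i ∈ S.map Prod.fst)).length

/-- `expSupport^top` of a nonempty pattern (junk value `0` on the empty pattern). -/
noncomputable def expSupTop [DecidableEq I] (DB : UDB I) (α : List I) : ℝ :=
  match α.getLast? with
  | none => 0
  | some i =>
      maxPrDB DB α.dropLast * Phat (projDB α.dropLast DB) i *
        (supCount (projDB α.dropLast DB) i : ℝ)

/-- Item `i` occurs in some sequence of `D`. -/
def ItemOccursIn (D : UDB I) (i : I) : Prop :=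
  ∃ S ∈ D, i ∈ S.map Prod.fst

/-- `sWeight`: average weight of the items of a pattern. -/
noncomputable def sWeight (w : I → ℝ) (α : List I) : ℝ :=
  (α.map w).sum / (α.length : ℝ)

/-- Maximum weight among the items of a pattern (`0` for the empty pattern). -/
noncomputable def mxWs (w : I → ℝ) (α : List I) : ℝ :=
  WithBot.unbotD 0 ((α.map w).maximum)

/-- Maximum weight among items occurring in some sequence of `D` (`0` if none). -/
noncomputable def mxWDB (w : I → ℝ) (D : UDB I) : ℝ :=
  WithBot.unbotD 0 ((D.flatten.map fun e => w e.1).maximum)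

/-- `wgt^cap`. -/
noncomputable def wgtCap [DecidableEq I] (DB : UDB I) (w : I → ℝ) (α : List I) : ℝ :=
  max (mxWDB w (projDB α.dropLast DB)) (mxWs w α)

/-- Weighted expected support. -/
noncomputable def WES [DecidableEq I] (DB : UDB I) (w : I → ℝ) (α : List I) : ℝ :=
  expSup DB α * sWeight w α

/-- `wExpSup^cap`. -/
noncomputable def wExpSupCap [DecidableEq I] (DB : UDB I) (w : I → ℝ) (α : List I) : ℝ :=
  expSupCap DB α * wgtCap DB w α

section AuxLemmas

variable [DecidableEq I]

private lemma le_maxUnbot {l : List ℝ} {a : ℝ} (h : a ∈ l) : a ≤ WithBot.unbotD 0 l.maximum := by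
  cases hm : l.maximum with
  | bot => rw [List.maximum_eq_bot] at hm; subst hm; simp at h
  | coe m => simpa using List.le_maximum_of_mem h hm

private lemma maxUnbot_le {l : List ℝ} {x : ℝ} (h0 : 0 ≤ x) (h : ∀ a ∈ l, a ≤ x) :
    WithBot.unbotD 0 l.maximum ≤ x := by
  cases hm : l.maximum with
  | bot => simpa using h0
  | coe m => simpa using h m (List.maximum_mem hm)

private lemma maxUnbot_nonneg {l : List ℝ} (h : ∀ a ∈ l, 0 ≤ a) : 0 ≤ WithBot.unbotD 0 l.maximum := by
  cases hm : l.maximum with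
  | bot => simp
  | coe m => simpa using h m (List.maximum_mem hm)

private lemma prod_le_maxPrS {o S : USeq I} {α : List I} (h1 : o.Sublist S)
    (h2 : o.map Prod.fst = α) : (o.map Prod.snd).prod ≤ maxPrS α S := by
  apply le_maxUnbot
  simp only [List.mem_map, List.mem_filter, List.mem_sublists, decide_eq_true_eq]
  exact ⟨o, ⟨h1, h2⟩, rfl⟩

private lemma maxPrS_le {S : USeq I} {α : List I} {x : ℝ} (h0 : 0 ≤ x)
    (h : ∀ o : USeq I, o.Sublist S → o.map Prod.fst = α → (o.map Prod.snd).prod ≤ x) :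
    maxPrS α S ≤ x := by
  apply maxUnbot_le h0
  intro a ha
  simp only [List.mem_map, List.mem_filter, List.mem_sublists, decide_eq_true_eq] at ha
  obtain ⟨o, ⟨ho1, ho2⟩, rfl⟩ := ha
  exact h o ho1 ho2

private lemma maxPrS_nonneg {S : USeq I} {α : List I} (h : ∀ e ∈ S, 0 ≤ e.2) :
    0 ≤ maxPrS α S := by
  apply maxUnbot_nonneg
  intro a ha
  simp only [List.mem_map, List.mem_filter, List.mem_sublists, decide_eq_true_eq] at ha
  obtain ⟨o, ⟨ho1, -⟩, rfl⟩ := ha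
  refine List.prod_nonneg ?_
  intro p hp
  obtain ⟨e, he, rfl⟩ := List.mem_map.1 hp
  exact h e (ho1.subset he)

private lemma projSeq_suffix (β : List I) (S : USeq I) :
    ∀ {S'}, projSeq β S = some S' → S' <:+ S := by
  induction S generalizing β with
  | nil =>
    intro S' h
    cases β with
    | nil => simp only [projSeq, Option.some.injEq] at h; subst h; exact List.suffix_rfl
    | cons i γ => simp [projSeq] at h
  | cons e rest ih =>
    intro S' h
    cases β with
    | nil => simp only [projSeq, Option.some.injEq] at h; subst h; exact List.suffix_rfl
    | cons i γ =>
      obtain ⟨x, p⟩ := e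
      by_cases hx : x = i
      · simp only [projSeq, if_pos hx] at h
        exact (ih γ h).trans (List.suffix_cons _ _)
      · simp only [projSeq, if_neg hx] at h
        exact (ih (i :: γ) h).trans (List.suffix_cons _ _)

private lemma projSeq_tail (S : USeq I) : ∀ (i : I) (γ : List I) {T : USeq I},
    projSeq (i :: γ) S = some T → ∃ T', projSeq γ S = some T' ∧ T <:+ T' := by
  induction S with
  | nil => intro i γ T h; simp [projSeq] at h
  | cons e rest ih =>
    intro i γ T h
    obtain ⟨x, p⟩ := e
    by_cases hx : x = i
    · simp only [projSeq, if_pos hx] at h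
      cases γ with
      | nil =>
        refine ⟨(x, p) :: rest, rfl, ?_⟩
        simp only [projSeq, Option.some.injEq] at h
        subst h
        exact List.suffix_cons _ _
      | cons j δ =>
        obtain ⟨T₁, h1, s1⟩ := ih j δ h
        by_cases hj : x = j
        · exact ⟨T₁, by simp only [projSeq, if_pos hj]; exact h1, s1⟩
        · exact ⟨T, by simp only [projSeq, if_neg hj]; exact h, List.suffix_rfl⟩
    · simp only [projSeq, if_neg hx] at h
      cases γ with
      | nil =>
        exact ⟨(x, p) :: rest, rfl, (projSeq_suffix _ _ h).trans (List.suffix_cons _ _)⟩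
      | cons j δ =>
        obtain ⟨T₁, h1, s1⟩ := ih i (j :: δ) h
        by_cases hj : x = j
        · obtain ⟨T₂, h2, s2⟩ := ih j δ h1
          exact ⟨T₂, by simp only [projSeq, if_pos hj]; exact h2, s1.trans s2⟩
        · exact ⟨T₁, by simp only [projSeq, if_neg hj]; exact h1, s1⟩

private lemma projSeq_mono (S₁ : USeq I) : ∀ (β : List I) (S₂ : USeq I) {T : USeq I},
    S₂ <:+ S₁ → projSeq β S₂ = some T → ∃ T', projSeq β S₁ = some T' ∧ T <:+ T' := by
  induction S₁ with
  | nil =>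
    intro β S₂ T hs h
    rw [List.suffix_nil.1 hs] at h
    exact ⟨T, h, List.suffix_rfl⟩
  | cons e rest ih =>
    intro β S₂ T hs h
    rcases List.suffix_cons_iff.1 hs with rfl | hs'
    · exact ⟨T, h, List.suffix_rfl⟩
    · obtain ⟨T₁, h1, s1⟩ := ih β S₂ hs' h
      cases β with
      | nil =>
        simp only [projSeq, Option.some.injEq] at h
        subst h
        exact ⟨e :: rest, rfl, hs⟩
      | cons i γ =>
        obtain ⟨x, p⟩ := e
        by_cases hx : x = i
        · obtain ⟨T₂, h2, s2⟩ := projSeq_tail rest i γ h1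
          exact ⟨T₂, by simp only [projSeq, if_pos hx]; exact h2, s1.trans s2⟩
        · exact ⟨T₁, by simp only [projSeq, if_neg hx]; exact h1, s1⟩

private lemma projSeq_greedy (S : USeq I) : ∀ (β γ : List I) (o : USeq I),
    o.Sublist S → o.map Prod.fst = β ++ γ →
    ∃ S', projSeq β S = some S' ∧ (o.drop β.length).Sublist S' := by
  induction S with
  | nil =>
    intro β γ o ho hm
    rw [List.sublist_nil.1 ho] at hm ⊢
    cases β with
    | nil => exact ⟨[], rfl, by simp⟩
    | cons i δ => simp at hm
  | cons e rest ih =>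
    intro β γ o ho hm
    cases β with
    | nil => exact ⟨e :: rest, rfl, by simpa using ho⟩
    | cons i δ =>
      obtain ⟨x, p⟩ := e
      cases ho with
      | cons _ h =>
        obtain ⟨T, hT, sT⟩ := ih (i :: δ) γ o h hm
        obtain ⟨T', hT', sTT⟩ := projSeq_mono ((x, p) :: rest) (i :: δ) rest (List.suffix_cons _ _) hT
        exact ⟨T', hT', sT.trans sTT.sublist⟩
      | cons_cons _ h =>
        simp only [List.map_cons, List.cons_append, List.cons.injEq] at hm
        obtain ⟨hx, hm'⟩ := hm
        obtain ⟨T, hT, sT⟩ := ih δ γ _ h hm'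
        exact ⟨T, by simp only [projSeq, if_pos hx]; exact hT, by simpa using sT⟩

private lemma le_Phat {D : UDB I} {i : I} {e : I × ℝ} {S' : USeq I}
    (hS : S' ∈ D) (he : e ∈ S') (hi : e.1 = i) : e.2 ≤ Phat D i := by
  apply le_maxUnbot
  simp only [List.mem_map, List.mem_filter, decide_eq_true_eq, List.mem_flatten]
  exact ⟨e, ⟨⟨S', hS, he⟩, hi⟩, rfl⟩

private lemma Phat_nonneg {D : UDB I} {i : I} (h : ∀ S ∈ D, ∀ e ∈ S, 0 ≤ e.2) :
    0 ≤ Phat D i := by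
  apply maxUnbot_nonneg
  intro a ha
  simp only [List.mem_map, List.mem_filter, List.mem_flatten, decide_eq_true_eq] at ha
  obtain ⟨e, ⟨⟨S, hS, heS⟩, -⟩, rfl⟩ := ha
  exact h S hS e heS

private lemma projDB_nonneg {DB : UDB I} (hp : ∀ S ∈ DB, ∀ e ∈ S, 0 ≤ e.2) (β : List I) :
    ∀ S' ∈ projDB β DB, ∀ e ∈ S', 0 ≤ e.2 := by
  intro S' hS' e he
  obtain ⟨S, hS, hproj⟩ := List.mem_filterMap.1 hS'
  exact hp S hS e ((projSeq_suffix β S hproj).sublist.subset he)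

private lemma maxPrDB_nonneg {DB : UDB I} (hp : ∀ S ∈ DB, ∀ e ∈ S, 0 ≤ e.2) (β : List I) :
    0 ≤ maxPrDB DB β :=
  Finset.prod_nonneg fun _ _ => Phat_nonneg (projDB_nonneg hp _)

private lemma prod_le_maxPrDB {DB : UDB I} (hp : ∀ S ∈ DB, ∀ e ∈ S, 0 ≤ e.2)
    {S o : USeq I} {β : List I} (hS : S ∈ DB) (ho : o.Sublist S)
    (hm : o.map Prod.fst = β) :
    (o.map Prod.snd).prod ≤ maxPrDB DB β := by
  have hlen : o.length = β.length := by rw [← hm, List.length_map]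
  have hprod : (o.map Prod.snd).prod
      = ∏ k : Fin β.length, (o.get (Fin.cast hlen.symm k)).2 := by
    conv_lhs => rw [← List.ofFn_get o]
    rw [List.map_ofFn, List.prod_ofFn]
    exact Fintype.prod_equiv (finCongr hlen) _ _ (fun k => rfl)
  rw [hprod]
  unfold maxPrDB
  apply Finset.prod_le_prod
  · intro k _
    refine hp S hS _ (ho.subset ?_)
    simp only [List.get_eq_getElem]
    exact List.getElem_mem _
  · intro k _
    have hk : k.val < o.length := by rw [hlen]; exact k.2
    have hsplit : o.map Prod.fst = β.take k.val ++ β.drop k.val := by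
      rw [hm, List.take_append_drop]
    obtain ⟨S', hproj, hsub⟩ := projSeq_greedy S (β.take k.val) (β.drop k.val) o ho hsplit
    have hklen : (β.take k.val).length = k.val := by
      simp [List.length_take, Nat.min_eq_left k.2.le]
    rw [hklen] at hsub
    have hmem : o.get (Fin.cast hlen.symm k) ∈ o.drop k.val := by
      rw [List.drop_eq_getElem_cons hk]
      exact List.mem_cons_self
    have hmem' : o.get (Fin.cast hlen.symm k) ∈ S' := hsub.subset hmem
    have hSin : S' ∈ projDB (β.take k.val) DB := List.mem_filterMap.2 ⟨S, hS, hproj⟩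
    have hfst : (o.get (Fin.cast hlen.symm k)).1 = β.get k := by
      have h1 : (o.map Prod.fst)[k.val]'(by simpa using hk) = β[k.val]'k.2 := by
        simp only [hm]
      simpa [List.get_eq_getElem, List.getElem_map] using h1
    exact le_Phat hSin hmem' hfst

private lemma sum_filterMap_getD {A B : Type*} (p : A → Option B) (h : B → ℝ) (l : List A) :
    ((l.filterMap p).map h).sum = (l.map fun a => ((p a).map h).getD 0).sum := by
  induction l with
  | nil => simp
  | cons a t ih => cases hp : p a <;> simp [List.filterMap_cons, hp, ih]

end AuxLemmas

/-- Lemma 1: if all probabilities of `DB` are nonnegative, then for every nonempty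
pattern `α`, `expSup(α) ≤ expSup^cap(α)`. -/
theorem expSup_le_expSupCap [DecidableEq I]
    (DB : UDB I) (hp : ∀ S ∈ DB, ∀ e ∈ S, 0 ≤ e.2)
    (α : List I) (hα : α ≠ []) :
    expSup DB α ≤ expSupCap DB α := by
  classical
  set β := α.dropLast with hβ
  set i := α.getLast hα with hi
  have hαeq : β ++ [i] = α := List.dropLast_append_getLast hα
  have hlast : α.getLast? = some i := List.getLast?_eq_getLast hα
  have hC : 0 ≤ maxPrDB DB β := maxPrDB_nonneg hp β
  have key : ∀ S ∈ DB,
      maxPrS α S ≤ maxPrDB DB β * (((projSeq β S).map (maxPrS [i])).getD 0) := by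
    intro S hS
    cases hpS : projSeq β S with
    | none =>
      simp only [Option.map_none, Option.getD_none, mul_zero]
      apply maxPrS_le le_rfl
      intro o ho hmo
      exfalso
      obtain ⟨S', hproj, -⟩ := projSeq_greedy S β [i] o ho (by rw [hmo, hαeq])
      rw [hpS] at hproj
      exact absurd hproj (by simp)
    | some S' =>
      simp only [Option.map_some, Option.getD_some]
      have hS'nn : ∀ e ∈ S', 0 ≤ e.2 := fun e he =>
        hp S hS e ((projSeq_suffix β S hpS).sublist.subset he)
      apply maxPrS_le (mul_nonneg hC (maxPrS_nonneg hS'nn))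
      intro o ho hmo
      have hmo' : o.map Prod.fst = β ++ [i] := by rw [hmo, hαeq]
      have hlen : o.length = β.length + 1 := by
        have := congrArg List.length hmo'
        simpa using this
      obtain ⟨S'', hproj, hsub⟩ := projSeq_greedy S β [i] o ho hmo'
      rw [hpS] at hproj
      obtain rfl : S' = S'' := Option.some.inj hproj
      obtain ⟨e, he⟩ : ∃ e, o.drop β.length = [e] :=
        List.length_eq_one_iff.1 (by simp [hlen])
      have hdm : (o.drop β.length).map Prod.fst = [i] := by
        rw [List.map_drop, hmo']
        simp
      have hefst : e.1 = i := by rw [he] at hdm; simpa using hdm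
      rw [he] at hsub
      have hemem : e ∈ S' := hsub.subset (List.mem_singleton_self e)
      have heS : e ∈ S := (projSeq_suffix β S hpS).sublist.subset hemem
      have hoeq : o = o.take β.length ++ [e] := by rw [← he, List.take_append_drop]
      have htake_sub : (o.take β.length).Sublist S := (List.take_sublist _ _).trans ho
      have htake_fst : (o.take β.length).map Prod.fst = β := by
        rw [List.map_take, hmo']
        exact List.take_left
      have hprod : (o.map Prod.snd).prod = ((o.take β.length).map Prod.snd).prod * e.2 := by
        conv_lhs => rw [hoeq]
        simp
      rw [hprod]
      exact mul_le_mul (prod_le_maxPrDB hp hS htake_sub htake_fst)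
        (by simpa using prod_le_maxPrS hsub (by simp [hefst]))
        (hp S hS e heS) hC
  have step1 : expSup DB α
      ≤ (DB.map fun S => maxPrDB DB β * (((projSeq β S).map (maxPrS [i])).getD 0)).sum :=
    List.sum_le_sum key
  have step2 : (DB.map fun S => maxPrDB DB β * (((projSeq β S).map (maxPrS [i])).getD 0)).sum
      = maxPrDB DB β * ((projDB β DB).map fun S' => maxPrS [i] S').sum := by
    rw [List.sum_map_mul_left]
    congr 1
    exact (sum_filterMap_getD (projSeq β) (maxPrS [i]) DB).symm
  rw [expSupCap, hlast]
  exact step1.trans (le_of_eq step2)
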